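/- In the NE algorithm with lazy edge removal, after the clean-up phase of each partition p_i the following holds: for every vertex v not in the core set C, the working adjacency list of v contains no vertex of C. Consequently, expansions of subsequent partitions never reach a core vertex, and no edge both of whose endpoints are in C is ever visited or assigned again after clean-up. -/

import Mathlib

/-!
Model of the NE algorithm with *lazy edge removal*.

A state consists of the core set `C`, secondary sets `S_1, …, S_k` and a
working adjacency structure (initially the adjacency lists of `G`).  During
phase `i` the operations are `MoveToSecondary_i(u)` (requires `u ∉ C ∪ S_i`
and adds `u` to `S_i`; the edges `{u, w}` with `w` in `u`'s working adjacency
list and `w ∈ C ∪ S_i` are the ones assigned to a partition by this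
operation) and `MoveToCore_i(v)` (requires `v ∉ C`, adds `v` to `C`, and then
applies `MoveToSecondary_i(u)` to every neighbor `u` of `v` in `v`'s working
adjacency list with `u ∉ C ∪ S_i`).  Lazy edge removal: no adjacency-list
entries are deleted during a phase; instead, at the end of each phase `i`
(the clean-up of phase `i`), for every `v ∈ S_i`, every entry `u ∈ C ∪ S_i`
is deleted from `v`'s working adjacency list.  An execution consists, for
each phase `i = 1, …, k` in order, of a block of phase-`i` operations
followed by the clean-up of phase `i`.
-/

/-- An operation of the NE algorithm with lazy edge removal. -/
inductive COp (V : Type*) (k : ℕ) where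
  | secondary (i : Fin k) (v : V)
  | core (i : Fin k) (v : V)
  | cleanup (i : Fin k)
  deriving DecidableEq

/-- The phase of an operation. -/
def COp.phase {V : Type*} {k : ℕ} : COp V k → Fin k
  | .secondary i _ => i
  | .core i _ => i
  | .cleanup i => i

/-- Whether an operation is a clean-up operation. -/
def COp.isCleanup {V : Type*} {k : ℕ} : COp V k → Bool
  | .secondary _ _ => false
  | .core _ _ => false
  | .cleanup _ => true

/-- A state: core set, secondary sets, and the working adjacency structure. -/
structure CState (V : Type*) (k : ℕ) where
  core : Finset V
  sec : Fin k → Finset V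
  adj : V → Finset V

variable {V : Type*} [DecidableEq V] [Fintype V]

/-- The initial state: `C` and all `S_i` are empty, and the working adjacency
structure equals the adjacency lists of `G`. -/
def CState.init (G : SimpleGraph V) [DecidableRel G.Adj] (k : ℕ) :
    CState V k :=
  ⟨∅, fun _ => ∅, fun v => G.neighborFinset v⟩

/-- The transition relation of the NE algorithm with lazy edge removal. -/
inductive CStep {k : ℕ} : CState V k → COp V k → CState V k → Prop
  | secondary (σ : CState V k) (i : Fin k) (u : V)
      (hu : u ∉ σ.core ∪ σ.sec i) :
      CStep σ (.secondary i u)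
        { σ with sec := Function.update σ.sec i (insert u (σ.sec i)) }
  | core (σ : CState V k) (i : Fin k) (v : V) (hv : v ∉ σ.core) :
      CStep σ (.core i v)
        { core := insert v σ.core,
          sec := Function.update σ.sec i
            (σ.sec i ∪ (σ.adj v \ (insert v σ.core ∪ σ.sec i))),
          adj := σ.adj }
  | cleanup (σ : CState V k) (i : Fin k) :
      CStep σ (.cleanup i)
        { σ with adj := fun v =>
            if v ∈ (σ.sec i) then σ.adj v \ (σ.core ∪ σ.sec i) else σ.adj v }

/-- `CExec σ ops σ'` : starting in state `σ`, performing the sequence of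
operations `ops` leads to state `σ'`. -/
inductive CExec {k : ℕ} : CState V k → List (COp V k) → CState V k → Prop
  | nil (σ : CState V k) : CExec σ [] σ
  | cons {σ σ' σ'' : CState V k} {op : COp V k} {ops : List (COp V k)} :
      CStep σ op σ' → CExec σ' ops σ'' → CExec σ (op :: ops) σ''

section Aux

variable {k : ℕ}

/-- Weak symmetry of the working adjacency structure: an asymmetric entry can
only point at (or from) a core vertex. -/
def NESym (σ : CState V k) : Prop :=
  ∀ u v : V, v ∈ σ.adj u → u ∈ σ.adj v ∨ u ∈ σ.core ∨ v ∈ σ.core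

/-- The post-cleanup property: adjacency lists of non-core vertices contain
no core vertex. -/
def NEClean (σ : CState V k) : Prop :=
  ∀ v : V, v ∉ σ.core → ∀ u ∈ σ.adj v, u ∉ σ.core

/-- The in-phase invariant for phase `i`. -/
def NEInv (σ : CState V k) (i : Fin k) : Prop :=
  (∀ v : V, v ∉ σ.core → ∀ u ∈ σ.adj v, u ∈ σ.core → v ∈ σ.sec i) ∧ NESym σ

lemma NEClean.inv {σ : CState V k} (hP : NEClean σ) (hS : NESym σ) (i : Fin k) :
    NEInv σ i :=
  ⟨fun v hv u hu huc => absurd huc (hP v hv u hu), hS⟩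

lemma cstep_core_mono {σ σ' : CState V k} {op : COp V k}
    (h : CStep σ op σ') : σ.core ⊆ σ'.core := by
  cases h <;> simp [Finset.subset_insert]

lemma cexec_core_mono {σ σ' : CState V k} {l : List (COp V k)}
    (h : CExec σ l σ') : σ.core ⊆ σ'.core := by
  induction h with
  | nil => exact subset_rfl
  | cons hstep _ ih => exact (cstep_core_mono hstep).trans ih

lemma cexec_nil_eq {σ σ' : CState V k} (h : CExec σ [] σ') : σ = σ' := by
  cases h; rfl

lemma cexec_append {σ σ'' : CState V k} {l₁ l₂ : List (COp V k)}
    (h : CExec σ (l₁ ++ l₂) σ'') :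
    ∃ τ, CExec σ l₁ τ ∧ CExec τ l₂ σ'' := by
  induction l₁ generalizing σ with
  | nil => exact ⟨σ, CExec.nil σ, h⟩
  | cons op l₁ ih =>
    cases h with
    | cons hstep hexec =>
      obtain ⟨τ, h1, h2⟩ := ih hexec
      exact ⟨τ, CExec.cons hstep h1, h2⟩

lemma cstep_inv {σ σ' : CState V k} {op : COp V k} {i : Fin k}
    (h : CStep σ op σ') (hph : op.phase = i) (hcl : op.isCleanup = false)
    (hI : NEInv σ i) : NEInv σ' i := by
  obtain ⟨h1, h2⟩ := hI
  cases h with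
  | secondary i₀ u hu =>
    obtain rfl : i₀ = i := hph
    refine ⟨fun v hv w hw hwc => ?_, h2⟩
    simp only [Function.update_self]
    exact Finset.mem_insert_of_mem (h1 v hv w hw hwc)
  | core i₀ c hc =>
    obtain rfl : i₀ = i := hph
    constructor
    · intro v hv w hw hwc
      simp only [Finset.mem_insert, not_or] at hv
      obtain ⟨hvc, hvcore⟩ := hv
      simp only [Function.update_self, Finset.mem_union, Finset.mem_sdiff,
        Finset.mem_insert, not_or]
      rcases Finset.mem_insert.mp hwc with rfl | hwcore
      · -- w = c : use symmetry to get v ∈ adj c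
        rcases h2 v w hw with hvadj | hvc' | hwc'
        · by_cases hvs : v ∈ σ.sec i₀
          · exact Or.inl hvs
          · exact Or.inr ⟨hvadj, ⟨hvc, hvcore⟩, hvs⟩
        · exact absurd hvc' hvcore
        · exact absurd hwc' hc
      · exact Or.inl (h1 v hvcore w hw hwcore)
    · intro u v hvu
      rcases h2 u v hvu with h | h | h
      · exact Or.inl h
      · exact Or.inr (Or.inl (Finset.mem_insert_of_mem h))
      · exact Or.inr (Or.inr (Finset.mem_insert_of_mem h))
  | cleanup => simp [COp.isCleanup] at hcl

lemma cexec_inv {σ σ' : CState V k} {l : List (COp V k)} {i : Fin k}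
    (h : CExec σ l σ')
    (hl : ∀ op ∈ l, op.phase = i ∧ op.isCleanup = false)
    (hI : NEInv σ i) : NEInv σ' i := by
  induction h with
  | nil => exact hI
  | @cons σ σ' σ'' op ops hstep hexec ih =>
    exact ih (fun o ho => hl o (List.mem_cons_of_mem _ ho))
      (cstep_inv hstep (hl op (List.mem_cons_self)).1
        (hl op (List.mem_cons_self)).2 hI)

lemma cleanup_clean {σ : CState V k} {i : Fin k} (hI : NEInv σ i) :
    NEClean { σ with adj := fun v =>
        if v ∈ (σ.sec i) then σ.adj v \ (σ.core ∪ σ.sec i) else σ.adj v } ∧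
    NESym { σ with adj := fun v =>
        if v ∈ (σ.sec i) then σ.adj v \ (σ.core ∪ σ.sec i) else σ.adj v } := by
  obtain ⟨h1, h2⟩ := hI
  constructor
  · intro v hv u hu huc
    simp only at hu hv huc
    by_cases hvs : v ∈ σ.sec i
    · rw [if_pos hvs] at hu
      exact (Finset.mem_sdiff.mp hu).2 (Finset.mem_union_left _ huc)
    · rw [if_neg hvs] at hu
      exact hvs (h1 v hv u hu huc)
  · intro u v hvu
    simp only at hvu ⊢
    have hvu' : v ∈ σ.adj u := by
      by_cases hus : u ∈ σ.sec i
      · rw [if_pos hus] at hvu; exact (Finset.mem_sdiff.mp hvu).1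
      · rwa [if_neg hus] at hvu
    rcases h2 u v hvu' with huv | h | h
    · by_cases hvs : v ∈ σ.sec i
      · -- need u ∉ core ∪ sec i, else u is core
        by_cases hus : u ∈ σ.sec i
        · rw [if_pos hus] at hvu
          exact absurd (Finset.mem_union_right _ hvs)
            (Finset.mem_sdiff.mp hvu).2
        · by_cases huc : u ∈ σ.core
          · exact Or.inr (Or.inl huc)
          · refine Or.inl ?_
            rw [if_pos hvs]
            exact Finset.mem_sdiff.mpr ⟨huv, by
              simp only [Finset.mem_union, not_or]; exact ⟨huc, hus⟩⟩
      · rw [if_neg hvs]; exact Or.inl huv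
    · exact Or.inr (Or.inl h)
    · exact Or.inr (Or.inr h)

lemma ne_main (G : SimpleGraph V) [DecidableRel G.Adj]
    (blocks : Fin k → List (COp V k))
    (hblocks : ∀ i : Fin k, ∀ op ∈ blocks i,
        op.phase = i ∧ op.isCleanup = false) :
    ∀ m : ℕ, m ≤ k → ∀ σ : CState V k,
      CExec (CState.init G k)
        (((List.finRange k).take m).flatMap
          fun j => blocks j ++ [COp.cleanup j]) σ →
      NEClean σ ∧ NESym σ := by
  intro m
  induction m with
  | zero =>
    intro _ σ hexec
    simp only [List.take_zero, List.flatMap_nil] at hexec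
    have := cexec_nil_eq hexec
    subst this
    constructor
    · intro v hv u hu huc
      simp [CState.init] at huc
    · intro u v hvu
      simp only [CState.init, SimpleGraph.mem_neighborFinset] at hvu ⊢
      exact Or.inl hvu.symm
  | succ m ih =>
    intro hm σ hexec
    have hmk : m < k := hm
    have hlen : m < (List.finRange k).length := by simpa using hmk
    rw [List.take_succ, List.getElem?_eq_getElem hlen] at hexec
    simp only [Option.toList_some, List.flatMap_append, List.flatMap_cons,
      List.flatMap_nil, List.append_nil] at hexec
    obtain ⟨τ, hτ1, hτ2⟩ := cexec_append hexec
    have hPS := ih (Nat.le_of_lt hmk) τ hτ1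
    set j := (List.finRange k)[m] with hj
    obtain ⟨τ', hb, hc⟩ := cexec_append hτ2
    have hIτ' : NEInv τ' j := cexec_inv hb (hblocks j) (hPS.1.inv hPS.2 j)
    cases hc with
    | cons hstep hrest =>
      have := cexec_nil_eq hrest
      subst this
      cases hstep with
      | cleanup => exact cleanup_clean hIτ'

end Aux

/-- In the NE algorithm with lazy edge removal, after the
clean-up phase of each partition `p_i` the following holds: for every vertex
`v` not in the core set `C`, the working adjacency list of `v` contains no
vertex of `C`.  Consequently, expansions of subsequent partitions never reach
a core vertex, and no edge both of whose endpoints are in `C` is ever visited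
or assigned again after clean-up: every vertex that is the argument of a
later `MoveToSecondary` or `MoveToCore` operation is outside `C`, and no edge
`{u, w}` visited (and assigned) by a later `MoveToSecondary` operation has
both endpoints in `C`. -/
theorem ne_cleanup_separates_core
    (G : SimpleGraph V) [DecidableRel G.Adj] {k : ℕ} (hk : 1 ≤ k)
    (blocks : Fin k → List (COp V k))
    (hblocks : ∀ i : Fin k, ∀ op ∈ blocks i,
        op.phase = i ∧ op.isCleanup = false)
    (i : Fin k) (σ : CState V k)
    (hexec : CExec (CState.init G k)
      (((List.finRange k).take (i.1 + 1)).flatMap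
        fun j => blocks j ++ [COp.cleanup j]) σ) :
    -- after the clean-up of phase `i`, the working adjacency list of any
    -- non-core vertex contains no core vertex
    (∀ v : V, v ∉ σ.core → ∀ u ∈ σ.adj v, u ∉ σ.core) ∧
    -- consequently, subsequent expansions never reach a core vertex, and no
    -- edge with both endpoints in the core set is ever visited or assigned
    -- again
    (∀ (l l₁ l₂ : List (COp V k)) (op : COp V k) (τ τ' σ' : CState V k),
        CExec σ l σ' → l = l₁ ++ op :: l₂ → CExec σ l₁ τ → CStep τ op τ' →
        (∀ (j : Fin k) (u : V),
          op = COp.secondary j u ∨ op = COp.core j u → u ∉ σ.core) ∧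
        (∀ (j : Fin k) (u : V), op = COp.secondary j u →
          ∀ w ∈ τ.adj u ∩ (τ.core ∪ τ.sec j),
            ¬(u ∈ σ.core ∧ w ∈ σ.core))) := by
  have hPS := ne_main G blocks hblocks (i.1 + 1) i.2 σ hexec
  refine ⟨hPS.1, ?_⟩
  intro l l₁ l₂ op τ τ' σ' _ _ hexec₁ hstep
  have hmono : σ.core ⊆ τ.core := cexec_core_mono hexec₁
  constructor
  · intro j u hor hu
    rcases hor with rfl | rfl
    · cases hstep with
      | secondary _ _ hu' =>
        exact hu' (Finset.mem_union_left _ (hmono hu))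
    · cases hstep with
      | core _ _ hv' => exact hv' (hmono hu)
  · intro j u heq w _ hcon
    subst heq
    cases hstep with
    | secondary _ _ hu' =>
      exact hu' (Finset.mem_union_left _ (hmono hcon.1))
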